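/- Every ring R contains the complete graph K_{χ(R)} as a minor; that is, there exist χ(R) pairwise disjoint nonempty subsets of V(R), each inducing a connected subgraph, with at least one edge of R between every two of them. -/

import Mathlib

open SimpleGraph

/-- The closed neighborhood `N_G[v]` of a vertex `v`. -/
def closedNbhd {V : Type} (G : SimpleGraph V) (v : V) : Set V :=
  insert v (G.neighborSet v)

/-- `X` (indexed cyclically by `ZMod k`) is a ring partition of `G`:
a partition into `k` nonempty sets, each of which can be ordered so that the
closed neighborhoods are nested, with the last one covering `X i` and the first
one being exactly `X (i-1) ∪ X i ∪ X (i+1)`. -/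
def IsRingPartition {V : Type} (G : SimpleGraph V) (k : ℕ) (X : ZMod k → Set V) : Prop :=
  (∀ i, (X i).Nonempty) ∧
  (∀ v : V, ∃! i, v ∈ X i) ∧
  ∀ i, ∃ (m : ℕ) (hm : 0 < m) (u : Fin m → V),
    Function.Injective u ∧
    Set.range u = X i ∧
    (∀ j j' : Fin m, j ≤ j' → closedNbhd G (u j') ⊆ closedNbhd G (u j)) ∧
    X i ⊆ closedNbhd G (u ⟨m - 1, by omega⟩) ∧
    closedNbhd G (u ⟨0, hm⟩) = X (i - 1) ∪ X i ∪ X (i + 1)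

/-- `G` is a `k`-ring. -/
def IsRing {V : Type} (G : SimpleGraph V) (k : ℕ) : Prop :=
  ∃ X : ZMod k → Set V, IsRingPartition G k X

/-- `X` is a hyperhole partition of `G`: a partition into `k` nonempty cliques,
each complete to the two neighboring cliques and anticomplete to all remaining
vertices. -/
def IsHyperholePartition {V : Type} (G : SimpleGraph V) (k : ℕ) (X : ZMod k → Set V) : Prop :=
  (∀ i, (X i).Nonempty) ∧
  (∀ v : V, ∃! i, v ∈ X i) ∧
  (∀ i, G.IsClique (X i)) ∧
  (∀ i, ∀ x ∈ X i, ∀ y ∈ X (i - 1) ∪ X (i + 1), G.Adj x y) ∧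
  (∀ i, ∀ x ∈ X i, ∀ y, y ∉ X (i - 1) ∪ X i ∪ X (i + 1) → ¬ G.Adj x y)

/-- `G` is a `k`-hyperhole. -/
def IsHyperhole {V : Type} (G : SimpleGraph V) (k : ℕ) : Prop :=
  ∃ X : ZMod k → Set V, IsHyperholePartition G k X

/-- `X` is a hyperantihole partition of `G`: a partition into `k` nonempty cliques,
each complete to all vertices outside the two neighboring cliques (and itself),
and anticomplete to the two neighboring cliques. -/
def IsHyperantiholePartition {V : Type} (G : SimpleGraph V) (k : ℕ) (X : ZMod k → Set V) : Prop :=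
  (∀ i, (X i).Nonempty) ∧
  (∀ v : V, ∃! i, v ∈ X i) ∧
  (∀ i, G.IsClique (X i)) ∧
  (∀ i, ∀ x ∈ X i, ∀ y, y ∉ X (i - 1) ∪ X i ∪ X (i + 1) → G.Adj x y) ∧
  (∀ i, ∀ x ∈ X i, ∀ y ∈ X (i - 1) ∪ X (i + 1), ¬ G.Adj x y)

/-- `G` is a `k`-hyperantihole. -/
def IsHyperantihole {V : Type} (G : SimpleGraph V) (k : ℕ) : Prop :=
  ∃ X : ZMod k → Set V, IsHyperantiholePartition G k X

/-- A vertex is simplicial if its neighborhood is a clique. -/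
def IsSimplicial {V : Type} (G : SimpleGraph V) (v : V) : Prop :=
  G.IsClique (G.neighborSet v)

/-- A graph is perfect if every induced subgraph has chromatic number equal to
its clique number. -/
def IsPerfect {V : Type} (G : SimpleGraph V) : Prop :=
  ∀ S : Set V, (G.induce S).chromaticNumber = ((G.induce S).cliqueNum : ℕ∞)

/-- The function `f_k`: `⌊kn/(k-1)⌋` if `n ≡ 0, 1 (mod k-1)`, and `⌈kn/(k-1)⌉`
otherwise. -/
def ringF (k n : ℕ) : ℕ :=
  if n % (k - 1) ≤ 1 then k * n / (k - 1) else (k * n + (k - 2)) / (k - 1)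

/-- The function `g_k`: `⌊kn/(k-1)⌋` if `n mod (k-1) ∈ {0, …, (k-3)/2}`, and
`⌈kn/(k-1)⌉` if `n mod (k-1) ∈ {(k-1)/2, …, k-2}`. -/
def ringG (k n : ℕ) : ℕ :=
  if n % (k - 1) ≤ (k - 3) / 2 then k * n / (k - 1) else (k * n + (k - 2)) / (k - 1)

/-- The function `f_T`: `⌊5n/4⌋` if `n ≡ 0, 1 (mod 4)`, and `⌈5n/4⌉` if
`n ≡ 2, 3 (mod 4)`. -/
def fT (n : ℕ) : ℕ :=
  if n % 4 ≤ 1 then 5 * n / 4 else (5 * n + 3) / 4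

/-- `G` contains the complete graph `K_m` as a minor, witnessed by `m` pairwise
disjoint nonempty branch sets, each inducing a connected subgraph, with an edge
between every two of them. -/
def HasCompleteMinor {V : Type} (G : SimpleGraph V) (m : ℕ) : Prop :=
  ∃ S : Fin m → Set V,
    (∀ i, (S i).Nonempty) ∧
    (∀ i j, i ≠ j → Disjoint (S i) (S j)) ∧
    (∀ i, (G.induce (S i)).Connected) ∧
    (∀ i j, i ≠ j → ∃ x ∈ S i, ∃ y ∈ S j, G.Adj x y)


namespace RingHadwiger


variable {V : Type}

lemma connected_induce_singleton (G : SimpleGraph V) (x : V) :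
    (G.induce {x}).Connected := by
  haveI : Nonempty ({x} : Set V) := ⟨⟨x, rfl⟩⟩
  constructor
  intro a b
  have : a = b := by
    rcases a with ⟨a, ha⟩; rcases b with ⟨b, hb⟩
    simp only [Set.mem_singleton_iff] at ha hb
    subst ha; subst hb; rfl
  exact this ▸ SimpleGraph.Reachable.refl _

lemma connected_induce_of_chain (G : SimpleGraph V) (n : ℕ) (hn : 0 < n) (f : ℕ → V)
    (hadj : ∀ r, r + 1 < n → G.Adj (f r) (f (r + 1))) :
    (G.induce {v | ∃ r < n, f r = v}).Connected := by
  set S : Set V := {v | ∃ r < n, f r = v} with hS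
  have hmem : ∀ r, r < n → f r ∈ S := fun r hr => ⟨r, hr, rfl⟩
  have key : ∀ r (hr : r < n),
      (G.induce S).Reachable ⟨f 0, hmem 0 hn⟩ ⟨f r, hmem r hr⟩ := by
    intro r
    induction r with
    | zero => intro _; exact SimpleGraph.Reachable.refl _
    | succ r ih =>
      intro hr
      have hr' : r < n := Nat.lt_of_succ_lt hr
      refine (ih hr').trans ?_
      have : (G.induce S).Adj ⟨f r, hmem r hr'⟩ ⟨f (r+1), hmem (r+1) hr⟩ := hadj r hr
      exact this.reachable
  haveI : Nonempty S := ⟨⟨f 0, hmem 0 hn⟩⟩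
  constructor
  rintro ⟨a, ⟨r, hr, hfr⟩⟩ ⟨b, ⟨s, hs, hfs⟩⟩
  subst hfr; subst hfs
  exact (key r hr).symm.trans (key s hs)

lemma hasCompleteMinor_mono {G : SimpleGraph V} {a b : ℕ} (h : a ≤ b)
    (hb : HasCompleteMinor G b) : HasCompleteMinor G a := by
  obtain ⟨S, h1, h2, h3, h4⟩ := hb
  refine ⟨fun i => S (Fin.castLE h i), fun i => h1 _, fun i j hij => h2 _ _ ?_, fun i => h3 _,
    fun i j hij => h4 _ _ ?_⟩ <;>
  · intro hc; apply hij; exact Fin.castLE_injective h hc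

lemma hasCompleteMinor_of_clique {G : SimpleGraph V} (C : Finset V) (hC : G.IsClique (C : Set V))
    {n : ℕ} (hn : n ≤ C.card) : HasCompleteMinor G n := by
  classical
  obtain ⟨B, hBC, hB⟩ := Finset.exists_subset_card_eq hn
  have hBclique : G.IsClique (B : Set V) := hC.subset (by exact_mod_cast hBC)
  let e : Fin n → {x // x ∈ B} := fun i => B.equivFin.symm (Fin.cast hB.symm i)
  have einj : Function.Injective e := fun a b hab => by
    have := B.equivFin.symm.injective hab
    simpa [Fin.ext_iff] using this
  refine ⟨fun i => {(e i : V)}, fun i => ⟨_, rfl⟩, ?_, fun i => connected_induce_singleton _ _, ?_⟩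
  · intro i j hij
    simp only [Set.disjoint_singleton_left, Set.mem_singleton_iff]
    intro hc
    exact hij (einj (Subtype.ext hc))
  · intro i j hij
    refine ⟨_, rfl, _, rfl, ?_⟩
    exact hBclique (e i).2 (e j).2 (fun hc => hij (einj (Subtype.ext hc)))

lemma colorable_comap {W : Type} (f : W → V) {G : SimpleGraph V} {n : ℕ}
    (h : G.Colorable n) : (G.comap f).Colorable n := by
  obtain ⟨c⟩ := h
  exact ⟨c.comp ⟨f, fun hadj => hadj⟩⟩

lemma hasCompleteMinor_comap {W : Type} (f : W → V) (hf : Function.Injective f)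
    {G : SimpleGraph V} {n : ℕ} (h : HasCompleteMinor (G.comap f) n) :
    HasCompleteMinor G n := by
  obtain ⟨S, h1, h2, h3, h4⟩ := h
  refine ⟨fun i => f '' S i, fun i => (h1 i).image f, fun i j hij => ?_, fun i => ?_, ?_⟩
  · exact (Set.disjoint_image_iff hf).2 (h2 i j hij)
  · refine SimpleGraph.Connected.map
      (⟨fun a => ⟨f a.1, ⟨a.1, a.2, rfl⟩⟩, fun hadj => hadj⟩ :
        ((G.comap f).induce (S i)) →g (G.induce (f '' S i))) ?_ (h3 i)
    rintro ⟨w, ⟨v, hv, rfl⟩⟩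
    exact ⟨⟨v, hv⟩, rfl⟩
  · intro i j hij
    obtain ⟨x, hx, y, hy, hadj⟩ := h4 i j hij
    exact ⟨f x, ⟨x, hx, rfl⟩, f y, ⟨y, hy, rfl⟩, hadj⟩

open scoped Classical in
noncomputable def cnum (G : SimpleGraph V) [Fintype V] : ℕ :=
  Finset.sup (Finset.univ.filter (fun s : Finset V => G.IsClique (s : Set V))) Finset.card

open scoped Classical in
lemma card_le_cnum {G : SimpleGraph V} [Fintype V] (C : Finset V)
    (hC : G.IsClique (C : Set V)) : C.card ≤ cnum G :=
  Finset.le_sup (Finset.mem_filter.2 ⟨Finset.mem_univ _, hC⟩)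

open scoped Classical in
lemma exists_cnum_clique (G : SimpleGraph V) [Fintype V] :
    ∃ C : Finset V, G.IsClique (C : Set V) ∧ C.card = cnum G := by
  obtain ⟨C, hC, hcard⟩ := Finset.exists_mem_eq_sup
    (Finset.univ.filter (fun s : Finset V => G.IsClique (s : Set V)))
    ⟨∅, by simp⟩ Finset.card
  exact ⟨C, (Finset.mem_filter.1 hC).2, hcard.symm⟩



structure RD (V : Type) (k : ℕ) where
  R : SimpleGraph V
  X : ZMod k → Set V
  m : ZMod k → ℕ
  hm : ∀ i, 0 < m i
  u : ∀ i, Fin (m i) → V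
  inj : ∀ i, Function.Injective (u i)
  rng : ∀ i, Set.range (u i) = X i
  nest : ∀ i (a b : Fin (m i)), a ≤ b → closedNbhd R (u i b) ⊆ closedNbhd R (u i a)
  lastc : ∀ i, X i ⊆ closedNbhd R (u i ⟨m i - 1, Nat.sub_lt (hm i) Nat.one_pos⟩)
  hub : ∀ i, closedNbhd R (u i ⟨0, hm i⟩) = X (i - 1) ∪ X i ∪ X (i + 1)
  uniq : ∀ v, ∃! i, v ∈ X i
  hk : 4 ≤ k

namespace RD

variable {V : Type} {k : ℕ} (D : RD V k)

lemma mem_closed_iff {G : SimpleGraph V} {v w : V} :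
    w ∈ closedNbhd G v ↔ w = v ∨ G.Adj v w := Iff.rfl

lemma mem_block (i : ZMod k) (a : Fin (D.m i)) : D.u i a ∈ D.X i := by
  rw [← D.rng i]; exact ⟨a, rfl⟩

lemma exists_idx {i : ZMod k} {v : V} (hv : v ∈ D.X i) : ∃ a, D.u i a = v := by
  rw [← D.rng i] at hv; exact hv

lemma block_eq {v : V} {i j : ZMod k} (hi : v ∈ D.X i) (hj : v ∈ D.X j) : i = j := by
  obtain ⟨b, hb1, hb2⟩ := D.uniq v
  rw [hb2 i hi, hb2 j hj]

-- ZMod facts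
lemma natc_inj (hk : 4 ≤ k) {a b : ℕ} (ha : a < k) (hb : b < k) (h : (a : ZMod k) = b) : a = b := by
  have hk0 : k ≠ 0 := by omega
  have : NeZero k := ⟨hk0⟩
  rw [← ZMod.val_natCast_of_lt ha, ← ZMod.val_natCast_of_lt hb, h]

lemma block_ne_add (hk : 4 ≤ k) {i : ZMod k} {a b : ℕ} (ha : a < k) (hb : b < k) (hab : a ≠ b) :
    i + (a : ZMod k) ≠ i + (b : ZMod k) := by
  intro h
  exact hab (natc_inj hk ha hb (by exact add_left_cancel h))

lemma self_ne_add (hk : 4 ≤ k) {i : ZMod k} {a : ℕ} (h0 : 0 < a) (ha : a < k) :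
    i ≠ i + (a : ZMod k) := by
  have := block_ne_add hk (i := i) (a := 0) (b := a) (by omega) ha (by omega)
  simpa using this

lemma add_one_ne (hk : 4 ≤ k) (i : ZMod k) : i ≠ i + 1 := by
  have := self_ne_add hk (i := i) (a := 1) Nat.one_pos (by omega)
  simpa using this

lemma nbhd_sub (i : ZMod k) (a : Fin (D.m i)) :
    closedNbhd D.R (D.u i a) ⊆ D.X (i - 1) ∪ D.X i ∪ D.X (i + 1) := by
  rw [← D.hub i]
  exact D.nest i ⟨0, D.hm i⟩ a (by simp [Fin.le_def])

lemma adj_mem_closed {v w : V} (h : D.R.Adj v w) : w ∈ closedNbhd D.R v := Or.inr h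

lemma adj_blocks {v w : V} {i j : ZMod k} (h : D.R.Adj v w) (hv : v ∈ D.X i)
    (hw : w ∈ D.X j) : j = i - 1 ∨ j = i ∨ j = i + 1 := by
  obtain ⟨a, rfl⟩ := D.exists_idx hv
  have := D.nbhd_sub i a (D.adj_mem_closed h)
  rcases this with (h1 | h1) | h1
  · exact Or.inl (D.block_eq hw h1)
  · exact Or.inr (Or.inl (D.block_eq hw h1))
  · exact Or.inr (Or.inr (D.block_eq hw h1))

lemma block_clique (i : ZMod k) (a b : Fin (D.m i)) (hab : a ≠ b) :
    D.R.Adj (D.u i a) (D.u i b) := by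
  have h1 : D.u i a ∈ closedNbhd D.R (D.u i b) := by
    apply D.nest i b ⟨D.m i - 1, Nat.sub_lt (D.hm i) Nat.one_pos⟩
    · simp only [Fin.le_def]; omega
    · exact D.lastc i (D.mem_block i a)
  rcases h1 with h1 | h1
  · exact absurd (D.inj i h1) hab
  · exact h1.symm

lemma hub_adj_right (i : ZMod k) {v : V} (hv : v ∈ D.X (i + 1)) :
    D.R.Adj (D.u i ⟨0, D.hm i⟩) v := by
  have h1 : v ∈ closedNbhd D.R (D.u i ⟨0, D.hm i⟩) := by
    rw [D.hub i]; exact Or.inr hv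
  rcases h1 with h1 | h1
  · exfalso
    exact add_one_ne D.hk i (D.block_eq (h1 ▸ hv) (D.mem_block i ⟨0, D.hm i⟩)).symm
  · exact h1

lemma hub_adj_left (i : ZMod k) {v : V} (hv : v ∈ D.X i) :
    D.R.Adj (D.u (i + 1) ⟨0, D.hm (i + 1)⟩) v := by
  have h1 : v ∈ closedNbhd D.R (D.u (i+1) ⟨0, D.hm (i+1)⟩) := by
    rw [D.hub (i+1)]
    left; left
    rwa [add_sub_cancel_right]
  rcases h1 with h1 | h1
  · exfalso
    exact add_one_ne D.hk i (D.block_eq hv (h1 ▸ D.mem_block (i+1) ⟨0, D.hm (i+1)⟩))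
  · exact h1

lemma cross_nest {i : ZMod k} {a a' : Fin (D.m i)} {b b' : Fin (D.m (i + 1))}
    (h : D.R.Adj (D.u i a) (D.u (i + 1) b)) (ha : a' ≤ a) (hb : b' ≤ b) :
    D.R.Adj (D.u i a') (D.u (i + 1) b') := by
  have hne : ∀ (x : Fin (D.m i)) (y : Fin (D.m (i+1))), D.u i x ≠ D.u (i+1) y := by
    intro x y hexy
    exact add_one_ne D.hk i (D.block_eq (D.mem_block i x) (hexy ▸ D.mem_block (i+1) y))
  have h1 : D.u (i+1) b ∈ closedNbhd D.R (D.u i a') :=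
    D.nest i a' a ha (D.adj_mem_closed h)
  have h2 : D.R.Adj (D.u i a') (D.u (i+1) b) := by
    rcases h1 with h1 | h1
    · exact absurd h1.symm (hne a' b)
    · exact h1
  have h3 : D.u i a' ∈ closedNbhd D.R (D.u (i+1) b') :=
    D.nest (i+1) b' b hb (D.adj_mem_closed h2.symm)
  rcases h3 with h3 | h3
  · exact absurd h3 (hne a' b')
  · exact h3.symm

end RD


namespace RD
variable {V : Type} {k : ℕ} (D : RD V k)
open Finset

noncomputable def blockFinset [Fintype V] [DecidableEq V] (i : ZMod k) : Finset V :=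
  Finset.image (D.u i) Finset.univ

lemma mem_blockFinset [Fintype V] [DecidableEq V] {i : ZMod k} {v : V} :
    v ∈ D.blockFinset i ↔ v ∈ D.X i := by
  simp only [blockFinset, Finset.mem_image, Finset.mem_univ, true_and]
  rw [← D.rng i]
  exact Iff.rfl

lemma card_blockFinset [Fintype V] [DecidableEq V] (i : ZMod k) :
    (D.blockFinset i).card = D.m i := by
  rw [blockFinset, Finset.card_image_of_injective _ (D.inj i), Finset.card_univ, Fintype.card_fin]

lemma blockFinset_clique [Fintype V] [DecidableEq V] (i : ZMod k) :
    D.R.IsClique (D.blockFinset i : Set V) := by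
  intro x hx y hy hxy
  rw [Finset.mem_coe, D.mem_blockFinset] at hx hy
  obtain ⟨a, rfl⟩ := D.exists_idx hx
  obtain ⟨b, rfl⟩ := D.exists_idx hy
  exact D.block_clique i a b (fun h => hxy (by rw [h]))

lemma block_card_le [Fintype V] (i : ZMod k) : D.m i ≤ cnum D.R := by
  classical
  rw [← D.card_blockFinset i]
  exact card_le_cnum _ (D.blockFinset_clique i)

lemma sub_one_eq (hk : 4 ≤ k) (i : ZMod k) : i - 1 = i + ((k - 1 : ℕ) : ZMod k) := by
  have h1 : ((k - 1 : ℕ) : ZMod k) = (k : ZMod k) - 1 := by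
    rw [Nat.cast_sub (by omega), Nat.cast_one]
  rw [h1, ZMod.natCast_self]
  ring

lemma resolve (hk : 4 ≤ k) {p r : ZMod k} (h1 : r = p - 1 ∨ r = p ∨ r = p + 1)
    (h2 : r = p ∨ r = p + 1 ∨ r = p + 2) : r = p ∨ r = p + 1 := by
  rcases h1 with h | h | h
  · exfalso
    rw [sub_one_eq hk] at h
    rcases h2 with h2 | h2 | h2
    · have hh : p + ((k-1 : ℕ) : ZMod k) = p + ((0 : ℕ) : ZMod k) := by
        rw [← h, h2]; simp
      exact block_ne_add hk (show k-1<k by omega) (show 0<k by omega) (by omega) hh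
    · have hh : p + ((k-1 : ℕ) : ZMod k) = p + ((1 : ℕ) : ZMod k) := by
        rw [← h, h2]; simp
      exact block_ne_add hk (show k-1<k by omega) (show 1<k by omega) (by omega) hh
    · have hh : p + ((k-1 : ℕ) : ZMod k) = p + ((2 : ℕ) : ZMod k) := by
        rw [← h, h2]; push_cast; ring
      exact block_ne_add hk (show k-1<k by omega) (show 2<k by omega) (by omega) hh
  · exact Or.inl h
  · exact Or.inr h

/-- every clique is contained in two consecutive blocks -/
lemma two_blocks (C : Finset V) (hC : D.R.IsClique (C : Set V)) :
    ∃ i, (C : Set V) ⊆ D.X i ∪ D.X (i + 1) := by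
  classical
  by_cases hne : C.Nonempty
  · obtain ⟨v0, hv0⟩ := hne
    obtain ⟨i0, hi0, -⟩ := D.uniq v0
    by_cases hall : ∀ v ∈ C, v ∈ D.X i0
    · exact ⟨i0, fun v hv => Or.inl (hall v hv)⟩
    · push_neg at hall
      obtain ⟨w0, hw0C, hw0⟩ := hall
      obtain ⟨j0, hj0, -⟩ := D.uniq w0
      have hvw : v0 ≠ w0 := fun h => hw0 (h ▸ hi0)
      have hadj : D.R.Adj v0 w0 := hC (Finset.mem_coe.2 hv0) (Finset.mem_coe.2 hw0C) hvw
      have hj0i0 : j0 = i0 - 1 ∨ j0 = i0 + 1 := by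
        rcases D.adj_blocks hadj hi0 hj0 with h | h | h
        · exact Or.inl h
        · exact absurd (h ▸ hj0) hw0
        · exact Or.inr h
      obtain ⟨p, va, vb, hvaC, hvbC, hva, hvb⟩ :
          ∃ p va vb, va ∈ C ∧ vb ∈ C ∧ va ∈ D.X p ∧ vb ∈ D.X (p + 1) := by
        rcases hj0i0 with h | h
        · exact ⟨i0 - 1, w0, v0, hw0C, hv0, h ▸ hj0, by rwa [sub_add_cancel]⟩
        · exact ⟨i0, v0, w0, hv0, hw0C, hi0, h ▸ hj0⟩
      refine ⟨p, fun x hxC => ?_⟩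
      obtain ⟨r, hr, -⟩ := D.uniq x
      have hx1 : r = p - 1 ∨ r = p ∨ r = p + 1 := by
        by_cases hxa : x = va
        · rw [hxa] at hr
          exact Or.inr (Or.inl (D.block_eq hr hva))
        · exact D.adj_blocks
            (hC (Finset.mem_coe.2 hvaC) hxC (fun h => hxa h.symm)) hva hr
      have hx2 : r = p ∨ r = p + 1 ∨ r = p + 2 := by
        by_cases hxb : x = vb
        · rw [hxb] at hr
          exact Or.inr (Or.inl (D.block_eq hr hvb))
        · have := D.adj_blocks
            (hC (Finset.mem_coe.2 hvbC) hxC (fun h => hxb h.symm)) hvb hr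
          rw [add_sub_cancel_right] at this
          rcases this with h | h | h
          · exact Or.inl h
          · exact Or.inr (Or.inl h)
          · exact Or.inr (Or.inr (by rw [h]; ring))
      rcases resolve D.hk hx1 hx2 with h | h
      · exact Or.inl (h ▸ hr)
      · exact Or.inr (h ▸ hr)
  · rw [Finset.not_nonempty_iff_eq_empty] at hne
    subst hne
    exact ⟨0, fun v hv => by simp at hv⟩

end RD


namespace RD
variable {V : Type} {k : ℕ} (D : RD V k)

noncomputable def blk (v : V) : ZMod k := (D.uniq v).choose

lemma blk_mem (v : V) : v ∈ D.X (D.blk v) := (D.uniq v).choose_spec.1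

lemma blk_eq {v : V} {i : ZMod k} (h : v ∈ D.X i) : D.blk v = i :=
  D.block_eq (D.blk_mem v) h

noncomputable def idx (v : V) : Fin (D.m (D.blk v)) :=
  (D.exists_idx (D.blk_mem v)).choose

lemma idx_spec (v : V) : D.u (D.blk v) (D.idx v) = v :=
  (D.exists_idx (D.blk_mem v)).choose_spec

noncomputable def lvl (v : V) : ℕ := (D.idx v : ℕ)

lemma lvl_lt (v : V) : D.lvl v < D.m (D.blk v) := (D.idx v).isLt

lemma lvl_eq_of_mem {v : V} {i : ZMod k} (hv : v ∈ D.X i) (a : Fin (D.m i))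
    (ha : D.u i a = v) : D.lvl v = (a : ℕ) := by
  have hb : D.blk v = i := D.blk_eq hv
  subst hb
  have h2 : D.idx v = a := D.inj _ (by rw [D.idx_spec v, ha])
  rw [lvl, h2]

lemma lvl_inj {v w : V} (hb : D.blk v = D.blk w) (hl : D.lvl v = D.lvl w) : v = w := by
  have hwmem : w ∈ D.X (D.blk v) := hb ▸ D.blk_mem w
  obtain ⟨c, hc⟩ := D.exists_idx hwmem
  have hlw : D.lvl w = (c : ℕ) := D.lvl_eq_of_mem hwmem c hc
  have hidx : D.idx v = c := Fin.ext (by rw [← lvl, hl, hlw])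
  rw [← D.idx_spec v, hidx, hc]

/-- the ZMod element recovered from val -/
lemma blk_decomp (hk : 4 ≤ k) (i0 : ZMod k) (v : V) :
    D.blk v = i0 + (((D.blk v - i0).val : ℕ) : ZMod k) := by
  haveI : NeZero k := ⟨by omega⟩
  rw [ZMod.natCast_val, ZMod.cast_id]
  ring


/-- key cross-interface clique bound -/
lemma cliqueCross [Fintype V] {i : ZMod k} {a : Fin (D.m i)} {b : Fin (D.m (i + 1))}
    (h : D.R.Adj (D.u i a) (D.u (i + 1) b)) :
    (a : ℕ) + (b : ℕ) + 2 ≤ cnum D.R := by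
  classical
  set Ca : Finset V := Finset.image (D.u i) (Finset.Iic a) with hCa
  set Cb : Finset V := Finset.image (D.u (i+1)) (Finset.Iic b) with hCb
  have hdisj : Disjoint Ca Cb := by
    rw [Finset.disjoint_left]
    rintro v hva hvb
    simp only [hCa, hCb, Finset.mem_image] at hva hvb
    obtain ⟨x, _, rfl⟩ := hva
    obtain ⟨y, _, hy⟩ := hvb
    exact add_one_ne D.hk i (D.block_eq (D.mem_block i x) (hy ▸ D.mem_block (i+1) y))
  have hclique : D.R.IsClique ((Ca ∪ Cb : Finset V) : Set V) := by
    intro x hx y hy hxy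
    simp only [Finset.coe_union, Set.mem_union, Finset.mem_coe, hCa, hCb,
      Finset.mem_image] at hx hy
    rcases hx with ⟨xa, hxa, rfl⟩ | ⟨xb, hxb, rfl⟩ <;>
      rcases hy with ⟨ya, hya, rfl⟩ | ⟨yb, hyb, rfl⟩
    · exact D.block_clique i xa ya (fun hc => hxy (by rw [hc]))
    · exact D.cross_nest h (Finset.mem_Iic.1 hxa) (Finset.mem_Iic.1 hyb)
    · exact (D.cross_nest h (Finset.mem_Iic.1 hya) (Finset.mem_Iic.1 hxb)).symm
    · exact D.block_clique (i+1) xb yb (fun hc => hxy (by rw [hc]))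
  have hcard : (Ca ∪ Cb).card = (a : ℕ) + (b : ℕ) + 2 := by
    rw [Finset.card_union_of_disjoint hdisj, hCa, hCb,
      Finset.card_image_of_injective _ (D.inj i),
      Finset.card_image_of_injective _ (D.inj (i+1)), Fin.card_Iic, Fin.card_Iic]
    ring
  calc (a : ℕ) + (b : ℕ) + 2 = (Ca ∪ Cb).card := hcard.symm
    _ ≤ cnum D.R := card_le_cnum _ hclique

lemma colorable_of_small_block [Fintype V] (i0 : ZMod k) (h1 : D.m i0 = 1) :
    D.R.Colorable (cnum D.R + 1) := by
  haveI : NeZero k := ⟨by have := D.hk; omega⟩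
  set Wn := cnum D.R with hWn
  have hW1 : 1 ≤ Wn := le_trans (D.hm i0) (D.block_card_le i0)
  set r : V → ℕ := fun v => (D.blk v - i0).val with hr
  have hrk : ∀ v, r v < k := fun v => ZMod.val_lt _
  have hrd : ∀ v, D.blk v = i0 + ((r v : ℕ) : ZMod k) := fun v => D.blk_decomp D.hk i0 v
  have hmW : ∀ v, D.lvl v < Wn := fun v => lt_of_lt_of_le (D.lvl_lt v) (D.block_card_le _)
  set colN : V → ℕ := fun v =>
    if r v = 0 then Wn else if r v % 2 = 1 then D.lvl v else Wn - 1 - D.lvl v with hcolN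
  have hbound : ∀ v, colN v < Wn + 1 := by
    intro v
    simp only [hcolN]
    split_ifs
    · omega
    · exact lt_trans (hmW v) (by omega)
    · omega
  have hne0 : ∀ v, r v ≠ 0 → colN v < Wn := by
    intro v hv
    simp only [hcolN, if_neg hv]
    split_ifs
    · exact hmW v
    · omega
  -- the key asymmetric case
  have aux : ∀ v w, D.R.Adj v w → D.blk w = D.blk v + 1 → colN v ≠ colN w := by
    intro v w hadj hbw
    have hwmem : w ∈ D.X (D.blk v + 1) := hbw ▸ D.blk_mem w
    obtain ⟨b', hb'⟩ := D.exists_idx hwmem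
    have hlw : D.lvl w = (b' : ℕ) := D.lvl_eq_of_mem hwmem b' hb'
    have hcross : (D.idx v : ℕ) + (b' : ℕ) + 2 ≤ Wn := by
      apply D.cliqueCross
      rw [D.idx_spec v, hb']
      exact hadj
    have hsum : D.lvl v + D.lvl w + 2 ≤ Wn := by rw [hlw]; exact hcross
    -- relation between r v and r w
    have hrel : ((r v + 1 : ℕ) : ZMod k) = ((r w : ℕ) : ZMod k) := by
      have h2 : i0 + ((r w : ℕ) : ZMod k) = i0 + (((r v : ℕ) : ZMod k) + 1) := by
        rw [← add_assoc, ← hrd w, ← hrd v, hbw]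
      have h3 := add_left_cancel h2
      push_cast
      rw [h3]
    rcases Nat.lt_or_ge (r v + 1) k with hlt | hge
    · -- r w = r v + 1
      have hrw : r w = r v + 1 := (natc_inj D.hk (hrk w) hlt hrel.symm)
      rcases Nat.eq_zero_or_pos (r v) with h0 | hpos
      · -- v is the hub of X i0, color Wn; w has color < Wn
        have : colN v = Wn := by simp only [hcolN, if_pos h0]
        have hw0 : r w ≠ 0 := by omega
        have := hne0 w hw0
        omega
      · have hv0 : r v ≠ 0 := by omega
        have hw0 : r w ≠ 0 := by omega
        rcases Nat.even_or_odd (r v) with he | ho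
        · have hrv2 : r v % 2 = 0 := Nat.even_iff.1 he
          have hrw2 : r w % 2 = 1 := by omega
          simp only [hcolN, if_neg hv0, if_neg hw0, hrv2, hrw2]
          norm_num
          omega
        · have hrv2 : r v % 2 = 1 := Nat.odd_iff.1 ho
          have hrw2 : r w % 2 = 0 := by omega
          simp only [hcolN, if_neg hv0, if_neg hw0, hrv2, hrw2]
          norm_num
          omega
    · -- r v = k - 1, r w = 0
      have hrv : r v + 1 = k := by have := hrk v; omega
      have hrw : r w = 0 := by
        apply natc_inj D.hk (hrk w) (by omega : 0 < k)
        rw [← hrel, hrv]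
        simp [ZMod.natCast_self]
      have hv0 : r v ≠ 0 := by have := D.hk; omega
      have h2 : colN w = Wn := by simp only [hcolN, if_pos hrw]
      have := hne0 v hv0
      omega
  constructor
  refine SimpleGraph.Coloring.mk (fun v => (⟨colN v, hbound v⟩ : Fin (Wn + 1))) ?_
  intro v w hadj
  simp only [ne_eq, Fin.mk.injEq]
  intro hcol
  obtain ⟨bw, hbwmem, -⟩ := D.uniq w
  have hbw : D.blk w = bw := D.blk_eq hbwmem
  rcases D.adj_blocks hadj (D.blk_mem v) hbwmem with h | h | h
  · -- blk w = blk v - 1, i.e. blk v = blk w + 1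
    have : D.blk v = D.blk w + 1 := by rw [hbw, h]; ring
    exact aux w v hadj.symm this hcol.symm
  · -- same block
    have hsame : D.blk v = D.blk w := by rw [hbw, h]
    have hvw : v ≠ w := hadj.ne
    have hlne : D.lvl v ≠ D.lvl w := fun hl => hvw (D.lvl_inj hsame hl)
    have hrvw : r v = r w := by rw [hr]; simp only [hsame]
    by_cases h0 : r v = 0
    · -- both in block i0 which has one vertex: impossible
      have hbv : D.blk v = i0 := by
        have := hrd v
        rw [h0] at this
        simpa using this
      have hv1 : D.lvl v < 1 := by
        have := D.lvl_lt v
        rwa [hbv, h1] at this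
      have hw1 : D.lvl w < 1 := by
        have := D.lvl_lt w
        rwa [← hsame, hbv, h1] at this
      omega
    · have hw0 : r w ≠ 0 := by rw [← hrvw]; exact h0
      simp only [hcolN, if_neg h0, if_neg hw0, hrvw] at hcol
      have := hmW v
      have := hmW w
      split_ifs at hcol <;> omega
  · -- blk w = blk v + 1
    have : D.blk w = D.blk v + 1 := by rw [hbw, h]
    exact aux v w hadj this hcol

end RD


lemma closedNbhd_comap {V W : Type} (f : W → V) (hf : Function.Injective f)
    (G : SimpleGraph V) (x : W) :
    closedNbhd (G.comap f) x = f ⁻¹' closedNbhd G (f x) := by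
  ext y
  constructor
  · rintro (h | h)
    · exact Or.inl (by rw [h])
    · exact Or.inr h
  · rintro (h | h)
    · exact Or.inl (hf h)
    · exact Or.inr h

namespace RD
variable {V : Type} {k : ℕ} (D : RD V k)

/-- new block sizes after deleting a vertex of block `j0` -/
def dm (j0 : ZMod k) : ZMod k → ℕ := fun i => if i = j0 then D.m j0 - 1 else D.m i

lemma dm_def (j0 i : ZMod k) : D.dm j0 i = if i = j0 then D.m j0 - 1 else D.m i := rfl

lemma dm_lt (j0 i : ZMod k) (a : Fin (D.dm j0 i)) : (a : ℕ) < D.m i := by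
  have h : (a : ℕ) < if i = j0 then D.m j0 - 1 else D.m i := a.isLt
  split_ifs at h with h1
  · subst h1; omega
  · exact h

/-- index embedding skipping `p` -/
def emap (j0 : ZMod k) (p : Fin (D.m j0)) (i : ZMod k) (a : Fin (D.dm j0 i)) : Fin (D.m i) :=
  if hcond : i = j0 ∧ (p : ℕ) ≤ (a : ℕ) then
    ⟨(a : ℕ) + 1, by
      obtain ⟨h1, -⟩ := hcond
      subst h1
      have h : (a : ℕ) < if i = i then D.m i - 1 else D.m i := a.isLt
      rw [if_pos rfl] at h
      omega⟩
  else ⟨(a : ℕ), D.dm_lt j0 i a⟩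

lemma emap_val (j0 : ZMod k) (p : Fin (D.m j0)) (i : ZMod k) (a : Fin (D.dm j0 i)) :
    ((D.emap j0 p i a : Fin (D.m i)) : ℕ) =
      if i = j0 ∧ (p : ℕ) ≤ (a : ℕ) then (a : ℕ) + 1 else (a : ℕ) := by
  rw [emap]
  split_ifs with h
  · rfl
  · rfl

lemma emap_mono (j0 : ZMod k) (p : Fin (D.m j0)) (i : ZMod k) {a b : Fin (D.dm j0 i)}
    (hab : a ≤ b) : D.emap j0 p i a ≤ D.emap j0 p i b := by
  rw [Fin.le_def] at hab
  rw [Fin.le_def, D.emap_val, D.emap_val]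
  by_cases hij : i = j0
  · by_cases ha : (p : ℕ) ≤ (a : ℕ) <;> by_cases hb2 : (p : ℕ) ≤ (b : ℕ)
    · rw [if_pos ⟨hij, ha⟩, if_pos ⟨hij, hb2⟩]; omega
    · omega
    · rw [if_neg (by rintro ⟨-, hc⟩; omega), if_pos ⟨hij, hb2⟩]; omega
    · rw [if_neg (by rintro ⟨-, hc⟩; omega), if_neg (by rintro ⟨-, hc⟩; omega)]; omega
  · rw [if_neg (by rintro ⟨hc, -⟩; exact hij hc), if_neg (by rintro ⟨hc, -⟩; exact hij hc)]
    exact hab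

lemma emap_inj (j0 : ZMod k) (p : Fin (D.m j0)) (i : ZMod k) :
    Function.Injective (D.emap j0 p i) := by
  intro a b hab
  have h := congrArg (Fin.val) hab
  rw [D.emap_val, D.emap_val] at h
  apply Fin.ext
  by_cases hij : i = j0
  · by_cases ha : (p : ℕ) ≤ (a : ℕ) <;> by_cases hb2 : (p : ℕ) ≤ (b : ℕ)
    · rw [if_pos ⟨hij, ha⟩, if_pos ⟨hij, hb2⟩] at h; omega
    · rw [if_pos ⟨hij, ha⟩, if_neg (by rintro ⟨-, hc⟩; omega)] at h; omega
    · rw [if_neg (by rintro ⟨-, hc⟩; omega), if_pos ⟨hij, hb2⟩] at h; omega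
    · rw [if_neg (by rintro ⟨-, hc⟩; omega), if_neg (by rintro ⟨-, hc⟩; omega)] at h; omega
  · rw [if_neg (by rintro ⟨hc, -⟩; exact hij hc), if_neg (by rintro ⟨hc, -⟩; exact hij hc)] at h
    exact h

lemma emap_ne (j0 : ZMod k) (p : Fin (D.m j0)) (hp : (p : ℕ) ≠ 0) (a : Fin (D.dm j0 j0)) :
    D.emap j0 p j0 a ≠ p := by
  intro h
  have h2 := congrArg (Fin.val) h
  rw [D.emap_val] at h2
  by_cases hpa : (p : ℕ) ≤ (a : ℕ)
  · rw [if_pos ⟨rfl, hpa⟩] at h2; omega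
  · rw [if_neg (by rintro ⟨-, hc⟩; omega)] at h2; omega

lemma emap_surj (j0 : ZMod k) (p : Fin (D.m j0)) {i : ZMod k} (b : Fin (D.m i))
    (hb : i = j0 → (b : ℕ) ≠ (p : ℕ)) : ∃ a, D.emap j0 p i a = b := by
  by_cases h : i = j0
  · subst h
    have hbp : (b : ℕ) ≠ (p : ℕ) := hb rfl
    rcases Nat.lt_or_ge (b : ℕ) (p : ℕ) with hlt | hge
    · refine ⟨⟨(b : ℕ), by rw [dm_def, if_pos rfl]; have := p.isLt; omega⟩, ?_⟩
      apply Fin.ext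
      rw [D.emap_val]
      have : ¬ ((i = i) ∧ (p : ℕ) ≤ (b : ℕ)) := by
        rintro ⟨-, hc⟩; omega
      rw [if_neg this]
    · have hgt : (p : ℕ) < (b : ℕ) := by omega
      refine ⟨⟨(b : ℕ) - 1, by rw [dm_def, if_pos rfl]; have := b.isLt; omega⟩, ?_⟩
      apply Fin.ext
      rw [D.emap_val]
      have : (i = i) ∧ (p : ℕ) ≤ (((b : ℕ) - 1 : ℕ)) := ⟨rfl, by omega⟩
      rw [if_pos this]
      simp only []
      omega
  · refine ⟨⟨(b : ℕ), by rw [dm_def, if_neg h]; exact b.isLt⟩, ?_⟩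
    apply Fin.ext
    rw [D.emap_val]
    have : ¬ ((i = j0) ∧ (p : ℕ) ≤ (b : ℕ)) := by rintro ⟨hc, -⟩; exact h hc
    rw [if_neg this]

lemma dm_pos (j0 : ZMod k) (p : Fin (D.m j0)) (hp : (p : ℕ) ≠ 0) (i : ZMod k) :
    0 < D.dm j0 i := by
  rw [dm_def]
  split_ifs with h
  · have := p.isLt; omega
  · exact D.hm i

lemma emap_zero (j0 : ZMod k) (p : Fin (D.m j0)) (hp : (p : ℕ) ≠ 0) (i : ZMod k)
    (h0 : 0 < D.dm j0 i) : D.emap j0 p i ⟨0, h0⟩ = ⟨0, D.hm i⟩ := by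
  apply Fin.ext
  rw [D.emap_val]
  have : ¬ ((i = j0) ∧ (p : ℕ) ≤ ((⟨0, h0⟩ : Fin (D.dm j0 i)) : ℕ)) := by
    rintro ⟨-, hc⟩
    simp only [] at hc
    omega
  rw [if_neg this]

lemma u_ne_deleted (j0 : ZMod k) (p : Fin (D.m j0)) (hp : (p : ℕ) ≠ 0) {i : ZMod k}
    (a : Fin (D.dm j0 i)) : D.u i (D.emap j0 p i a) ≠ D.u j0 p := by
  intro h
  by_cases hi : i = j0
  · subst hi
    exact D.emap_ne _ p hp a (D.inj _ h)
  · exact hi (D.block_eq (D.mem_block i _) (h ▸ D.mem_block j0 p))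

/-- deleting a non-hub vertex of a ring yields a ring -/
noncomputable def delete (j0 : ZMod k) (p : Fin (D.m j0)) (hp : (p : ℕ) ≠ 0) :
    RD {v : V // v ≠ D.u j0 p} k where
  R := D.R.comap Subtype.val
  X i := Subtype.val ⁻¹' D.X i
  m := D.dm j0
  hm := D.dm_pos j0 p hp
  u i a := ⟨D.u i (D.emap j0 p i a), D.u_ne_deleted j0 p hp a⟩
  inj i a b hab := D.emap_inj j0 p i (D.inj i (congrArg Subtype.val hab))
  rng i := by
    ext ⟨v, hv⟩
    simp only [Set.mem_range, Set.mem_preimage]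
    constructor
    · rintro ⟨a, ha⟩
      have h2 := congrArg Subtype.val ha
      simp only at h2
      rw [← h2]
      exact D.mem_block i _
    · intro hvX
      obtain ⟨b, hb⟩ := D.exists_idx hvX
      have hbp : i = j0 → (b : ℕ) ≠ (p : ℕ) := by
        intro hi hc
        subst hi
        exact hv (by rw [← hb, Fin.ext hc])
      obtain ⟨a, ha⟩ := D.emap_surj j0 p b hbp
      refine ⟨a, Subtype.ext ?_⟩
      show D.u i (D.emap j0 p i a) = v
      rw [ha, hb]
  nest i a b hab := by
    rw [closedNbhd_comap _ Subtype.val_injective, closedNbhd_comap _ Subtype.val_injective]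
    exact Set.preimage_mono (D.nest i _ _ (D.emap_mono j0 p i hab))
  lastc i := by
    rintro ⟨v, hv⟩ hvX
    rw [closedNbhd_comap _ Subtype.val_injective]
    have h1 : v ∈ closedNbhd D.R (D.u i ⟨D.m i - 1, Nat.sub_lt (D.hm i) Nat.one_pos⟩) :=
      D.lastc i hvX
    refine D.nest i _ _ ?_ h1
    rw [Fin.le_def]
    exact Nat.le_pred_of_lt (Fin.is_lt _)
  hub i := by
    rw [closedNbhd_comap _ Subtype.val_injective]
    show Subtype.val ⁻¹' closedNbhd D.R (D.u i (D.emap j0 p i ⟨0, D.dm_pos j0 p hp i⟩)) = _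
    rw [D.emap_zero j0 p hp i (D.dm_pos j0 p hp i), D.hub i]
    simp [Set.preimage_union]
  uniq := by
    rintro ⟨v, hv⟩
    obtain ⟨i, hi, hiu⟩ := D.uniq v
    exact ⟨i, hi, fun j hj => hiu j hj⟩
  hk := D.hk

end RD


namespace RD
variable {V : Type} {k : ℕ} (D : RD V k)
open Finset

def top (i : ZMod k) (e : ℕ) : Set V := {v | ∃ a : Fin (D.m i), (a : ℕ) < e ∧ D.u i a = v}

lemma downclosed_mem {M : ℕ} (K : Finset (Fin M))
    (hdc : ∀ c c' : Fin M, c ∈ K → c' ≤ c → c' ∈ K) {e : ℕ} (he : e ≤ K.card)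
    {y : ℕ} (hy : y < e) (hyM : y < M) : (⟨y, hyM⟩ : Fin M) ∈ K := by
  by_contra hc
  have hsmall : ∀ c ∈ K, (c : ℕ) < y := by
    intro c hcK
    by_contra hge
    exact hc (hdc c ⟨y, hyM⟩ hcK (by rw [Fin.le_def]; simp only []; omega))
  have hcard : K.card ≤ (Finset.range y).card := by
    apply Finset.card_le_card_of_injOn (fun c : Fin M => (c : ℕ))
      (fun c hcK => Finset.mem_range.2 (hsmall c hcK))
      (fun a _ b _ hab => Fin.ext hab)
  rw [Finset.card_range] at hcard
  omega

lemma le_bot (i : ZMod k) (d : Fin (D.m i)) :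
    d ≤ (⟨D.m i - 1, Nat.sub_lt (D.hm i) Nat.one_pos⟩ : Fin (D.m i)) := by
  rw [Fin.le_def]
  have := d.isLt
  simp only []
  omega

/-- The main terminal-case analysis at the interface around block `i+1`. -/
lemma terminal_interface [Fintype V] {t e : ℕ} (ht : t = cnum D.R + e)
    (hncol : ¬ D.R.Colorable (t - 1))
    (i : ZMod k) (hm2 : 2 ≤ D.m (i + 1))
    (hdel : ∀ (p : Fin (D.m (i+1))), (p : ℕ) ≠ 0 →
      (D.R.comap (Subtype.val : {v : V // v ≠ D.u (i+1) p} → V)).Colorable (t - 1)) :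
    e ≤ D.m i ∧
    (∀ v ∈ D.X (i+1), ∀ w ∈ D.top (i+1+1) e, D.R.Adj v w) ∧
    (∀ v ∈ D.top i e, ∀ w ∈ D.X (i+1), D.R.Adj v w) := by
  classical
  have hW1 : 1 ≤ cnum D.R := le_trans (D.hm i) (D.block_card_le i)
  set bot : Fin (D.m (i+1)) := ⟨D.m (i+1) - 1, Nat.sub_lt (D.hm (i+1)) Nat.one_pos⟩ with hbot
  have hbot0 : (bot : ℕ) ≠ 0 := by simp only [hbot]; omega
  have hw0mem : D.u (i+1) bot ∈ D.X (i+1) := D.mem_block _ _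
  set IdxA : Finset (Fin (D.m i)) :=
    Finset.univ.filter (fun c => D.R.Adj (D.u (i+1) bot) (D.u i c)) with hIdxA
  set IdxB : Finset (Fin (D.m (i+1+1))) :=
    Finset.univ.filter (fun c => D.R.Adj (D.u (i+1) bot) (D.u (i+1+1) c)) with hIdxB
  set Nw : Finset V := Finset.univ.filter (fun v => D.R.Adj (D.u (i+1) bot) v) with hNw
  -- all t-1 colors appear on the neighborhood of w0
  obtain ⟨ψ⟩ := hdel bot hbot0
  have hcolors : ∀ c : Fin (t - 1), ∃ v, ∃ h3 : D.R.Adj (D.u (i+1) bot) v,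
      ψ ⟨v, h3.ne'⟩ = c := by
    by_contra hcon
    push_neg at hcon
    obtain ⟨c0, hc0⟩ := hcon
    apply hncol
    constructor
    refine SimpleGraph.Coloring.mk
      (fun v => if h : v = D.u (i+1) bot then c0 else ψ ⟨v, h⟩) ?_
    intro x y hadj
    by_cases hx : x = D.u (i+1) bot <;> by_cases hy : y = D.u (i+1) bot
    · subst hx; subst hy; exact absurd hadj (D.R.loopless.irrefl _)
    · subst hx
      rw [dif_pos rfl, dif_neg hy]
      intro hc
      exact (hc0 y hadj hc.symm).elim
    · subst hy
      rw [dif_neg hx, dif_pos rfl]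
      intro hc
      exact (hc0 x hadj.symm hc).elim
    · rw [dif_neg hx, dif_neg hy]
      exact ψ.valid hadj
  have hdeg : t - 1 ≤ Nw.card := by
    have hinj : (Finset.univ : Finset (Fin (t-1))).card ≤ Nw.card :=
      Finset.card_le_card_of_injOn
        (fun c : Fin (t-1) => (hcolors c).choose)
        (fun c _ => by
          obtain ⟨h3, -⟩ := (hcolors c).choose_spec
          simp only [hNw, Finset.mem_filter, Finset.mem_univ, true_and]
          simpa using h3)
        (fun c _ c' _ hcc => by
          obtain ⟨h3, hs⟩ := (hcolors c).choose_spec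
          obtain ⟨h3', hs'⟩ := (hcolors c').choose_spec
          rw [← hs, ← hs']
          congr 1
          exact Subtype.ext hcc)
    simpa using hinj
  -- partition of the neighborhood
  have hij1 : i ≠ i + 1 := add_one_ne D.hk i
  have hi1i2 : i + 1 ≠ i + 1 + 1 := add_one_ne D.hk (i+1)
  have hii2 : i ≠ i + 1 + 1 := by
    have := self_ne_add D.hk (i := i) (a := 2) (by omega) (by have := D.hk; omega)
    rw [Nat.cast_ofNat] at this
    rwa [show i + (2 : ZMod k) = i + 1 + 1 by ring] at this
  have hNweq : Nw = ((D.blockFinset (i+1)).erase (D.u (i+1) bot) ∪ IdxA.image (D.u i))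
      ∪ IdxB.image (D.u (i+1+1)) := by
    ext v
    simp only [hNw, Finset.mem_filter, Finset.mem_univ, true_and, Finset.mem_union,
      Finset.mem_erase, Finset.mem_image]
    constructor
    · intro hadj
      have hv3 := D.nbhd_sub (i+1) bot (D.adj_mem_closed hadj)
      rw [add_sub_cancel_right] at hv3
      rcases hv3 with (hv | hv) | hv
      · obtain ⟨c, rfl⟩ := D.exists_idx hv
        exact Or.inl (Or.inr ⟨c, by simp only [hIdxA, Finset.mem_filter,
          Finset.mem_univ, true_and]; exact hadj, rfl⟩)
      · exact Or.inl (Or.inl ⟨hadj.ne', D.mem_blockFinset.2 hv⟩)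
      · obtain ⟨c, rfl⟩ := D.exists_idx hv
        exact Or.inr ⟨c, by simp only [hIdxB, Finset.mem_filter,
          Finset.mem_univ, true_and]; exact hadj, rfl⟩
    · rintro ((⟨hne, hvb⟩ | ⟨c, hc, rfl⟩) | ⟨c, hc, rfl⟩)
      · rw [D.mem_blockFinset] at hvb
        obtain ⟨d, rfl⟩ := D.exists_idx hvb
        exact D.block_clique (i+1) bot d (fun hc => hne (by rw [hc]))
      · simpa only [hIdxA, Finset.mem_filter, Finset.mem_univ, true_and] using hc
      · simpa only [hIdxB, Finset.mem_filter, Finset.mem_univ, true_and] using hc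
  have hdisj12 : Disjoint ((D.blockFinset (i+1)).erase (D.u (i+1) bot))
      (IdxA.image (D.u i)) := by
    rw [Finset.disjoint_left]
    rintro v hv1 hv2
    obtain ⟨c, -, rfl⟩ := Finset.mem_image.1 hv2
    have h1 := D.mem_blockFinset.1 (Finset.mem_of_mem_erase hv1)
    exact hij1 (D.block_eq (D.mem_block i c) h1)
  have hdisj3 : Disjoint ((D.blockFinset (i+1)).erase (D.u (i+1) bot) ∪ IdxA.image (D.u i))
      (IdxB.image (D.u (i+1+1))) := by
    rw [Finset.disjoint_left]
    rintro v hv1 hv2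
    obtain ⟨c, -, rfl⟩ := Finset.mem_image.1 hv2
    rcases Finset.mem_union.1 hv1 with hv1 | hv1
    · have h1 := D.mem_blockFinset.1 (Finset.mem_of_mem_erase hv1)
      exact hi1i2 (D.block_eq h1 (D.mem_block (i+1+1) c))
    · obtain ⟨c', -, hc'⟩ := Finset.mem_image.1 hv1
      exact hii2 (D.block_eq (hc' ▸ D.mem_block i c') (D.mem_block (i+1+1) c))
  have hcardNw : Nw.card = (D.m (i+1) - 1) + IdxA.card + IdxB.card := by
    rw [hNweq, Finset.card_union_of_disjoint hdisj3, Finset.card_union_of_disjoint hdisj12,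
      Finset.card_erase_of_mem (D.mem_blockFinset.2 hw0mem), D.card_blockFinset,
      Finset.card_image_of_injective _ (D.inj i),
      Finset.card_image_of_injective _ (D.inj (i+1+1))]
  -- clique bounds
  have hcliqueA : D.m (i+1) + IdxA.card ≤ cnum D.R := by
    have hdisj : Disjoint (D.blockFinset (i+1)) (IdxA.image (D.u i)) := by
      rw [Finset.disjoint_left]
      rintro v hv1 hv2
      obtain ⟨c, -, rfl⟩ := Finset.mem_image.1 hv2
      exact hij1 (D.block_eq (D.mem_block i c) (D.mem_blockFinset.1 hv1))
    have hcl : D.R.IsClique ((D.blockFinset (i+1) ∪ IdxA.image (D.u i) : Finset V) : Set V) := by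
      intro x hx y hy hxy
      simp only [Finset.coe_union, Set.mem_union, Finset.mem_coe, Finset.mem_image] at hx hy
      rcases hx with hx | ⟨cx, hcx, rfl⟩ <;> rcases hy with hy | ⟨cy, hcy, rfl⟩
      · exact D.blockFinset_clique (i+1) hx hy hxy
      · -- x in block i+1, y = u i cy adjacent to w0
        have hbase : D.R.Adj (D.u i cy) (D.u (i+1) bot) := by
          have := (Finset.mem_filter.1 hcy).2
          exact this.symm
        obtain ⟨d, rfl⟩ := D.exists_idx (D.mem_blockFinset.1 hx)
        exact (D.cross_nest hbase (le_refl cy) (D.le_bot (i+1) d)).symm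
      · have hbase : D.R.Adj (D.u i cx) (D.u (i+1) bot) := by
          have := (Finset.mem_filter.1 hcx).2
          exact this.symm
        obtain ⟨d, rfl⟩ := D.exists_idx (D.mem_blockFinset.1 hy)
        exact D.cross_nest hbase (le_refl cx) (D.le_bot (i+1) d)
      · exact D.block_clique i cx cy (fun hc => hxy (by rw [hc]))
    have := card_le_cnum _ hcl
    rwa [Finset.card_union_of_disjoint hdisj, D.card_blockFinset,
      Finset.card_image_of_injective _ (D.inj i)] at this
  have hcliqueB : D.m (i+1) + IdxB.card ≤ cnum D.R := by
    have hdisj : Disjoint (D.blockFinset (i+1)) (IdxB.image (D.u (i+1+1))) := by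
      rw [Finset.disjoint_left]
      rintro v hv1 hv2
      obtain ⟨c, -, rfl⟩ := Finset.mem_image.1 hv2
      exact hi1i2 (D.block_eq (D.mem_blockFinset.1 hv1) (D.mem_block (i+1+1) c))
    have hcl : D.R.IsClique
        ((D.blockFinset (i+1) ∪ IdxB.image (D.u (i+1+1)) : Finset V) : Set V) := by
      intro x hx y hy hxy
      simp only [Finset.coe_union, Set.mem_union, Finset.mem_coe, Finset.mem_image] at hx hy
      rcases hx with hx | ⟨cx, hcx, rfl⟩ <;> rcases hy with hy | ⟨cy, hcy, rfl⟩
      · exact D.blockFinset_clique (i+1) hx hy hxy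
      · have hbase : D.R.Adj (D.u (i+1) bot) (D.u (i+1+1) cy) := (Finset.mem_filter.1 hcy).2
        obtain ⟨d, rfl⟩ := D.exists_idx (D.mem_blockFinset.1 hx)
        exact D.cross_nest hbase (D.le_bot (i+1) d) (le_refl cy)
      · have hbase : D.R.Adj (D.u (i+1) bot) (D.u (i+1+1) cx) := (Finset.mem_filter.1 hcx).2
        obtain ⟨d, rfl⟩ := D.exists_idx (D.mem_blockFinset.1 hy)
        exact (D.cross_nest hbase (D.le_bot (i+1) d) (le_refl cx)).symm
      · exact D.block_clique (i+1+1) cx cy (fun hc => hxy (by rw [hc]))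
    have := card_le_cnum _ hcl
    rwa [Finset.card_union_of_disjoint hdisj, D.card_blockFinset,
      Finset.card_image_of_injective _ (D.inj (i+1+1))] at this
  have hm1 : 1 ≤ D.m (i+1) := D.hm (i+1)
  have hAe : e ≤ IdxA.card := by omega
  have hBe : e ≤ IdxB.card := by omega
  -- downward closedness
  have hdcA : ∀ c c' : Fin (D.m i), c ∈ IdxA → c' ≤ c → c' ∈ IdxA := by
    intro c c' hc hcc
    simp only [hIdxA, Finset.mem_filter, Finset.mem_univ, true_and] at hc ⊢
    exact (D.cross_nest hc.symm hcc (le_refl bot)).symm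
  have hdcB : ∀ c c' : Fin (D.m (i+1+1)), c ∈ IdxB → c' ≤ c → c' ∈ IdxB := by
    intro c c' hc hcc
    simp only [hIdxB, Finset.mem_filter, Finset.mem_univ, true_and] at hc ⊢
    exact D.cross_nest hc (le_refl bot) hcc
  refine ⟨le_trans hAe (le_trans (Finset.card_le_univ IdxA) (by simp)), ?_, ?_⟩
  · rintro v hv w ⟨a, ha, rfl⟩
    obtain ⟨d, rfl⟩ := D.exists_idx hv
    have haB : a ∈ IdxB := by
      have := downclosed_mem IdxB hdcB hBe ha a.isLt
      rwa [show (⟨(a : ℕ), a.isLt⟩ : Fin (D.m (i+1+1))) = a from Fin.ext rfl] at this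
    have hbase : D.R.Adj (D.u (i+1) bot) (D.u (i+1+1) a) :=
      (Finset.mem_filter.1 haB).2
    exact D.cross_nest hbase (D.le_bot (i+1) d) (le_refl a)
  · rintro v ⟨a, ha, rfl⟩ w hw
    obtain ⟨d, rfl⟩ := D.exists_idx hw
    have haA : a ∈ IdxA := by
      have := downclosed_mem IdxA hdcA hAe ha a.isLt
      rwa [show (⟨(a : ℕ), a.isLt⟩ : Fin (D.m i)) = a from Fin.ext rfl] at this
    have hbase : D.R.Adj (D.u i a) (D.u (i+1) bot) :=
      ((Finset.mem_filter.1 haA).2).symm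
    exact D.cross_nest hbase (le_refl a) (D.le_bot (i+1) d)

end RD


namespace RD
variable {V : Type} {k : ℕ} (D : RD V k)

lemma band [Fintype V] {t e : ℕ} (he : 1 ≤ e) (ht : t = cnum D.R + e)
    (hncol : ¬ D.R.Colorable (t - 1))
    (hdel : ∀ (j0 : ZMod k) (p : Fin (D.m j0)), (p : ℕ) ≠ 0 →
      (D.R.comap (Subtype.val : {v : V // v ≠ D.u j0 p} → V)).Colorable (t - 1)) :
    (∀ j, e ≤ D.m j) ∧
    (∀ i : ZMod k, ∀ v ∈ D.X i, ∀ w ∈ D.top (i+1) e, D.R.Adj v w) ∧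
    (∀ i : ZMod k, ∀ v ∈ D.top i e, ∀ w ∈ D.X (i+1), D.R.Adj v w) := by
  rcases eq_or_lt_of_le he with he1 | he2
  · -- e = 1
    subst ht
    rw [← he1]
    refine ⟨fun j => D.hm j, ?_, ?_⟩
    · rintro i v hv w ⟨a, ha, rfl⟩
      have ha0 : a = ⟨0, D.hm (i+1)⟩ := Fin.ext (by simpa using ha)
      rw [ha0]
      exact (D.hub_adj_left i hv).symm
    · rintro i v ⟨a, ha, rfl⟩ w hw
      have ha0 : a = ⟨0, D.hm i⟩ := Fin.ext (by simpa using ha)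
      rw [ha0]
      exact D.hub_adj_right i hw
  · -- 2 ≤ e
    have he2' : 2 ≤ e := he2
    have hm2 : ∀ j, 2 ≤ D.m j := by
      intro j
      by_contra hc
      have hj1 : D.m j = 1 := by have := D.hm j; omega
      have hcol := (D.colorable_of_small_block j hj1).mono
        (show cnum D.R + 1 ≤ t - 1 by omega)
      exact hncol hcol
    have TI := fun i : ZMod k => D.terminal_interface ht hncol i (hm2 (i+1))
      (fun p hp => hdel (i+1) p hp)
    refine ⟨fun j => (TI j).1, ?_, fun i => (TI i).2.2⟩
    intro i
    have h2 := (TI (i-1)).2.1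
    rwa [sub_add_cancel] at h2

end RD


namespace RD
variable {V : Type} {k : ℕ} (D : RD V k)

lemma block_path_ne (hk : 4 ≤ k) (i0 : ZMod k) {r : ℕ} (hr : r < k - 2) :
    i0 + ((2 + r : ℕ) : ZMod k) ≠ i0 ∧ i0 + ((2 + r : ℕ) : ZMod k) ≠ i0 + 1 := by
  constructor
  · intro h
    exact self_ne_add hk (i := i0) (a := 2 + r) (by omega) (by omega) h.symm
  · intro h
    rw [show (i0 + 1 : ZMod k) = i0 + ((1 : ℕ) : ZMod k) by push_cast; ring] at h
    exact block_ne_add hk (a := 2 + r) (b := 1) (by omega) (by omega) (by omega) h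

lemma minor_of_band [Fintype V] {t e : ℕ} (he : 1 ≤ e) (ht : t = cnum D.R + e)
    (hem : ∀ j, e ≤ D.m j)
    (band1 : ∀ i : ZMod k, ∀ v ∈ D.X i, ∀ w ∈ D.top (i+1) e, D.R.Adj v w)
    (band2 : ∀ i : ZMod k, ∀ v ∈ D.top i e, ∀ w ∈ D.X (i+1), D.R.Adj v w) :
    HasCompleteMinor D.R t := by
  classical
  have hk := D.hk
  set Wn := cnum D.R with hWn
  obtain ⟨C, hCclique, hCcard⟩ := exists_cnum_clique D.R
  obtain ⟨i0, hC2⟩ := D.two_blocks C hCclique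
  set ec : Fin Wn → V := fun a => ↑(C.equivFin.symm (Fin.cast (by rw [hCcard]) a)) with hec
  have hecC : ∀ a, ec a ∈ C := fun a => (C.equivFin.symm _).2
  have hecinj : Function.Injective ec := by
    intro a b hab
    have h1 := C.equivFin.symm.injective (Subtype.ext hab)
    have h2 := congrArg Fin.val h1
    exact Fin.ext (by simpa using h2)
  have hylt : ∀ {y : ℕ}, y < e → ∀ (j : ZMod k), y < D.m j :=
    fun hy j => lt_of_lt_of_le hy (hem j)
  set pf : ∀ (y : ℕ), y < e → ℕ → V := fun y hy r =>
    D.u (i0 + ((2 + r : ℕ) : ZMod k)) ⟨y, hylt hy _⟩ with hpf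
  have hpf_mem : ∀ (y : ℕ) (hy : y < e) (r : ℕ),
      pf y hy r ∈ D.X (i0 + ((2 + r : ℕ) : ZMod k)) := fun y hy r => D.mem_block _ _
  have hpf_top : ∀ (y : ℕ) (hy : y < e) (r : ℕ),
      pf y hy r ∈ D.top (i0 + ((2 + r : ℕ) : ZMod k)) e := fun y hy r => ⟨_, hy, rfl⟩
  have hblocksucc : ∀ r : ℕ, (i0 + ((2 + (r+1) : ℕ) : ZMod k)) =
      (i0 + ((2 + r : ℕ) : ZMod k)) + 1 := by
    intro r
    push_cast
    ring
  have hchain : ∀ (y : ℕ) (hy : y < e) (r : ℕ), D.R.Adj (pf y hy r) (pf y hy (r+1)) := by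
    intro y hy r
    apply band1 (i0 + ((2 + r : ℕ) : ZMod k)) _ (hpf_mem y hy r)
    rw [← hblocksucc r]
    exact hpf_top y hy (r+1)
  have hend : ∀ (y : ℕ) (hy : y < e), ∀ c ∈ D.X i0, D.R.Adj (pf y hy (k-3)) c := by
    intro y hy c hc
    have h1 : (2 + (k-3) : ℕ) = k - 1 := by omega
    have h2 : (i0 + ((k-1 : ℕ) : ZMod k)) + 1 = i0 := by
      rw [Nat.cast_sub (by omega : 1 ≤ k), Nat.cast_one, ZMod.natCast_self]
      ring
    have hv : pf y hy (k-3) ∈ D.top (i0 + ((k-1 : ℕ) : ZMod k)) e := by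
      have h3 := hpf_top y hy (k-3)
      rwa [h1] at h3
    have hw : c ∈ D.X ((i0 + ((k-1 : ℕ) : ZMod k)) + 1) := by rw [h2]; exact hc
    exact band2 _ _ hv _ hw
  have hstart : ∀ (y : ℕ) (hy : y < e), ∀ c ∈ D.X (i0 + 1), D.R.Adj c (pf y hy 0) := by
    intro y hy c hc
    apply band1 (i0+1) c hc
    rw [show ((i0 + 1) + 1 : ZMod k) = i0 + ((2 + 0 : ℕ) : ZMod k) by push_cast; ring]
    exact hpf_top y hy 0
  have hpf_lvl : ∀ (y : ℕ) (hy : y < e) (r : ℕ), D.lvl (pf y hy r) = y := by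
    intro y hy r
    exact D.lvl_eq_of_mem (hpf_mem y hy r) ⟨y, hylt hy _⟩ rfl
  have hpf_ne_clique : ∀ (y : ℕ) (hy : y < e) (r : ℕ) (hr : r < k - 2) (c),
      c ∈ C → pf y hy r ≠ c := by
    intro y hy r hr c hcC hceq
    have hmem := hpf_mem y hy r
    rw [hceq] at hmem
    rcases hC2 (Finset.mem_coe.2 hcC) with hc | hc
    · exact (block_path_ne hk i0 hr).1 (D.block_eq hmem hc)
    · exact (block_path_ne hk i0 hr).2 (D.block_eq hmem hc)
  refine ⟨fun idx =>
    if h : (idx : ℕ) < Wn then {ec ⟨idx, h⟩}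
    else {v | ∃ r, r < k - 2 ∧ pf ((idx : ℕ) - Wn)
      (by have := idx.isLt; omega) r = v}, ?_, ?_, ?_, ?_⟩
  · -- nonempty
    intro idx
    dsimp only
    by_cases h : (idx : ℕ) < Wn
    · rw [dif_pos h]
      exact ⟨_, rfl⟩
    · rw [dif_neg h]
      exact ⟨_, ⟨0, by omega, rfl⟩⟩
  · -- disjoint
    intro i j hij
    dsimp only
    have hvij : (i : ℕ) ≠ (j : ℕ) := fun hc => hij (Fin.ext hc)
    by_cases hi : (i : ℕ) < Wn <;> by_cases hj : (j : ℕ) < Wn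
    · rw [dif_pos hi, dif_pos hj, Set.disjoint_singleton_left, Set.mem_singleton_iff]
      intro hc
      have := congrArg Fin.val (hecinj hc)
      simp only [] at this
      omega
    · rw [dif_pos hi, dif_neg hj]
      rw [Set.disjoint_left]
      rintro a ha ⟨r, hr, hpfa⟩
      rw [Set.mem_singleton_iff] at ha
      exact hpf_ne_clique ((j:ℕ) - Wn) (by have := j.isLt; omega) r hr _ (hecC ⟨i, hi⟩) (hpfa.trans ha)
    · rw [dif_neg hi, dif_pos hj]
      rw [Set.disjoint_left]
      rintro a ⟨r, hr, hpfa⟩ ha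
      rw [Set.mem_singleton_iff] at ha
      exact hpf_ne_clique ((i:ℕ) - Wn) (by have := i.isLt; omega) r hr _ (hecC ⟨j, hj⟩) (hpfa.trans ha)
    · rw [dif_neg hi, dif_neg hj]
      rw [Set.disjoint_left]
      rintro a ⟨r, hr, hpfa⟩ ⟨r', hr', hpfa'⟩
      have h1 : D.lvl a = (i : ℕ) - Wn := by rw [← hpfa]; exact hpf_lvl ((i:ℕ) - Wn) (by have := i.isLt; omega) r
      have h2 : D.lvl a = (j : ℕ) - Wn := by rw [← hpfa']; exact hpf_lvl ((j:ℕ) - Wn) (by have := j.isLt; omega) r'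
      have := i.isLt
      have := j.isLt
      omega
  · -- connected
    intro idx
    dsimp only
    by_cases h : (idx : ℕ) < Wn
    · rw [dif_pos h]
      exact connected_induce_singleton _ _
    · rw [dif_neg h]
      exact connected_induce_of_chain D.R (k-2) (by omega) _
        (fun r _ => hchain ((idx:ℕ) - Wn) (by have := idx.isLt; omega) r)
  · -- edges
    intro i j hij
    dsimp only
    have hvij : (i : ℕ) ≠ (j : ℕ) := fun hc => hij (Fin.ext hc)
    by_cases hi : (i : ℕ) < Wn <;> by_cases hj : (j : ℕ) < Wn
    · rw [dif_pos hi, dif_pos hj]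
      refine ⟨_, rfl, _, rfl, ?_⟩
      apply hCclique (Finset.mem_coe.2 (hecC ⟨i, hi⟩)) (Finset.mem_coe.2 (hecC ⟨j, hj⟩))
      intro hc
      have := congrArg Fin.val (hecinj hc)
      simp only [] at this
      omega
    · rw [dif_pos hi, dif_neg hj]
      rcases hC2 (Finset.mem_coe.2 (hecC ⟨i, hi⟩)) with hc | hc
      · exact ⟨_, rfl, _, ⟨k-3, by omega, rfl⟩, (hend _ (by have := j.isLt; omega) _ hc).symm⟩
      · exact ⟨_, rfl, _, ⟨0, by omega, rfl⟩, hstart _ (by have := j.isLt; omega) _ hc⟩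
    · rw [dif_neg hi, dif_pos hj]
      rcases hC2 (Finset.mem_coe.2 (hecC ⟨j, hj⟩)) with hc | hc
      · exact ⟨_, ⟨k-3, by omega, rfl⟩, _, rfl, hend _ (by have := i.isLt; omega) _ hc⟩
      · exact ⟨_, ⟨0, by omega, rfl⟩, _, rfl, (hstart _ (by have := i.isLt; omega) _ hc).symm⟩
    · rw [dif_neg hi, dif_neg hj]
      refine ⟨_, ⟨0, by omega, rfl⟩, _, ⟨0, by omega, rfl⟩, ?_⟩
      apply D.block_clique
      intro hc
      have := congrArg Fin.val hc
      simp only [] at this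
      have := i.isLt
      have := j.isLt
      omega

end RD


lemma exists_RD {V : Type} (R : SimpleGraph V) {k : ℕ} (hk : 4 ≤ k) (X : ZMod k → Set V)
    (hX : IsRingPartition R k X) : ∃ D : RD V k, D.R = R ∧ D.X = X := by
  obtain ⟨hne, huniq, hstr⟩ := hX
  choose m hm u inj rng nest lastc hub using hstr
  exact ⟨⟨R, X, m, hm, u, inj, rng, nest, fun i => lastc i, fun i => hub i, huniq, hk⟩, rfl, rfl⟩

lemma main_aux : ∀ (N : ℕ) {V : Type} [Fintype V] {k : ℕ} (D : RD V k),
    Fintype.card V ≤ N →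
    ∃ n : ℕ, D.R.chromaticNumber = (n : ℕ∞) ∧ HasCompleteMinor D.R n := by
  intro N
  induction N with
  | zero =>
    intro V _ k D hcard
    exfalso
    have : 0 < Fintype.card V := Fintype.card_pos_iff.2 ⟨D.u 0 ⟨0, D.hm 0⟩⟩
    omega
  | succ N ih =>
    intro V inst k D hcard
    classical
    have hfin : D.R.Colorable (Fintype.card V) := D.R.colorable_of_fintype
    have hχtop : D.R.chromaticNumber ≠ ⊤ := by
      intro hc
      have h2 := hfin.chromaticNumber_le
      rw [hc] at h2
      simp at h2
    set χn := D.R.chromaticNumber.toNat with hχndef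
    have hχ : D.R.chromaticNumber = (χn : ℕ∞) := (ENat.coe_toNat hχtop).symm
    have hcol : D.R.Colorable χn := by
      rw [← SimpleGraph.chromaticNumber_le_iff_colorable, hχ]
    set Wn := cnum D.R with hWn
    by_cases h1 : χn ≤ Wn
    · obtain ⟨C, hC, hCc⟩ := exists_cnum_clique D.R
      exact ⟨χn, hχ, hasCompleteMinor_of_clique C hC (by omega)⟩
    · push_neg at h1
      by_cases h2 : ∃ (j0 : ZMod k) (p : Fin (D.m j0)) (_ : (p : ℕ) ≠ 0),
          (D.R.comap (Subtype.val : {v : V // v ≠ D.u j0 p} → V)).chromaticNumber = (χn : ℕ∞)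
      · obtain ⟨j0, p, hp, hdel⟩ := h2
        have hcard' : Fintype.card {v : V // v ≠ D.u j0 p} ≤ N := by
          have h5 : Fintype.card {v : V // v ≠ D.u j0 p} < Fintype.card V :=
            Fintype.card_subtype_lt (x := D.u j0 p) (by simp)
          omega
        obtain ⟨n, hn1, hn2⟩ := ih (D.delete j0 p hp) hcard'
        have hR' : (D.delete j0 p hp).R =
            D.R.comap (Subtype.val : {v : V // v ≠ D.u j0 p} → V) := rfl
        rw [hR'] at hn1 hn2
        have hnχ : n = χn := by
          rw [hn1] at hdel
          exact_mod_cast hdel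
        rw [hnχ] at hn2
        exact ⟨χn, hχ, hasCompleteMinor_comap Subtype.val Subtype.val_injective hn2⟩
      · push_neg at h2
        have hdel : ∀ (j0 : ZMod k) (p : Fin (D.m j0)), (p : ℕ) ≠ 0 →
            (D.R.comap (Subtype.val : {v : V // v ≠ D.u j0 p} → V)).Colorable (χn - 1) := by
          intro j0 p hp
          have hle : (D.R.comap (Subtype.val : {v : V // v ≠ D.u j0 p} → V)).chromaticNumber
              ≤ (χn : ℕ∞) := (colorable_comap Subtype.val hcol).chromaticNumber_le
          have hne := h2 j0 p hp
          have htop' : (D.R.comap (Subtype.val : {v : V // v ≠ D.u j0 p} → V)).chromaticNumber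
              ≠ ⊤ := by
            intro hc
            rw [hc] at hle
            simp at hle
          rw [← SimpleGraph.chromaticNumber_le_iff_colorable]
          rw [← ENat.coe_toNat htop'] at hle hne ⊢
          have h3 : (D.R.comap (Subtype.val : {v : V // v ≠ D.u j0 p} → V)).chromaticNumber.toNat
              ≤ χn := by exact_mod_cast hle
          have h4 : (D.R.comap (Subtype.val : {v : V // v ≠ D.u j0 p} → V)).chromaticNumber.toNat
              ≠ χn := fun hc => hne (by exact_mod_cast hc)
          exact Nat.cast_le.2 (by omega)
        have hncol : ¬ D.R.Colorable (χn - 1) := by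
          intro hc
          have h3 := hc.chromaticNumber_le
          rw [hχ] at h3
          have h4 : χn ≤ χn - 1 := Nat.cast_le.mp h3
          omega
        obtain ⟨hem, hb1, hb2⟩ := D.band (t := χn) (e := χn - Wn) (by omega) (by omega)
          hncol hdel
        exact ⟨χn, hχ, D.minor_of_band (e := χn - Wn) (by omega) (by omega) hem hb1 hb2⟩

end RingHadwiger

/-- Every ring `R` contains the complete graph `K_{χ(R)}` as a minor. -/
theorem ring_hasCompleteMinor_chromaticNumber {V : Type} [Fintype V]
    (R : SimpleGraph V) (hR : ∃ k, 4 ≤ k ∧ IsRing R k) :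
    ∃ n : ℕ, R.chromaticNumber = (n : ℕ∞) ∧ HasCompleteMinor R n := by
  obtain ⟨k, hk, X, hX⟩ := hR
  obtain ⟨D, hD, -⟩ := RingHadwiger.exists_RD R hk X hX
  have h := RingHadwiger.main_aux (Fintype.card V) D le_rfl
  rwa [hD] at h
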